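/- Let t₁, t₂ be positive integers, n, k ≥ 0 integers. Let h ∈ ℝ[x,y] be quasi-homogeneous of type t = (t₁,t₂) and degree n + t₁ + t₂ with h ≠ 0, let μ be quasi-homogeneous of type t and degree n, and set F_n := X_h + μ·D₀. Let Δ be a linear subspace of P^t_{k+t₁+t₂} such that P^t_{k+t₁+t₂} = Δ ⊕ h·P^t_{k−n} (direct sum of subspaces). Then every quasi-homogeneous vector field (P,Q) of type t and degree k (i.e. P ∈ P^t_{k+t₁}, Q ∈ P^t_{k+t₂}) can be written uniquely as (P,Q) = X_g + η·D₀ + λ·F_n with g ∈ Δ, η ∈ P^t_k and λ ∈ P^t_{k−n}. -/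

import Mathlib

open MvPolynomial

/-- A polynomial in two variables is quasi-homogeneous of type `(t₁,t₂)` and
(integer) degree `k` if every monomial `x^a y^b` occurring in it satisfies
`t₁a + t₂b = k`.  (For `k < 0` only the zero polynomial qualifies.) -/
def IsQHZ (t₁ t₂ : ℕ) (k : ℤ) (p : MvPolynomial (Fin 2) ℝ) : Prop :=
  ∀ m ∈ p.support, (t₁ : ℤ) * m 0 + (t₂ : ℤ) * m 1 = k

namespace QHAux

lemma coeff_pderiv (i : Fin 2) (m : Fin 2 →₀ ℕ) (f : MvPolynomial (Fin 2) ℝ) :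
    coeff m (pderiv i f) = ((m i : ℝ) + 1) * coeff (m + Finsupp.single i 1) f := by
  induction f using MvPolynomial.induction_on' with
  | add p q hp hq => simp only [map_add, coeff_add, hp, hq]; ring
  | monomial s a =>
    rw [pderiv_monomial, coeff_monomial, coeff_monomial]
    by_cases h : s = m + Finsupp.single i 1
    · subst h
      have hsi : ((m + Finsupp.single i 1 : Fin 2 →₀ ℕ)) i = m i + 1 := by
        simp [Finsupp.add_apply, Finsupp.single_eq_same]
      rw [if_pos (add_tsub_cancel_right m (Finsupp.single i 1)), if_pos rfl, hsi]
      push_cast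
      ring
    · rw [if_neg h, mul_zero]
      by_cases h2 : s - Finsupp.single i 1 = m
      · rw [if_pos h2]
        have hsi : s i = 0 := by
          by_contra hsi
          apply h
          rw [← h2, tsub_add_cancel_of_le]
          exact Finsupp.single_le_iff.mpr (by omega)
        rw [hsi]
        simp
      · rw [if_neg h2]

lemma coeff_X_mul_pderiv (i : Fin 2) (m : Fin 2 →₀ ℕ) (f : MvPolynomial (Fin 2) ℝ) :
    coeff m (X i * pderiv i f) = (m i : ℝ) * coeff m f := by
  classical
  rw [coeff_X_mul']
  by_cases hmi : i ∈ m.support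
  · rw [if_pos hmi, coeff_pderiv]
    have hmi0 : m i ≠ 0 := Finsupp.mem_support_iff.mp hmi
    have hle : Finsupp.single i 1 ≤ m := Finsupp.single_le_iff.mpr (by omega)
    have h1 : m - Finsupp.single i 1 + Finsupp.single i 1 = m := tsub_add_cancel_of_le hle
    have h2 : ((m - Finsupp.single i 1 : Fin 2 →₀ ℕ)) i = m i - 1 := by
      rw [Finsupp.tsub_apply, Finsupp.single_eq_same]
    rw [h1, h2]
    congr 1
    have hcast : ((m i - 1 : ℕ) : ℝ) = (m i : ℝ) - 1 := by
      have : (1:ℕ) ≤ m i := by omega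
      push_cast [this]; ring
    rw [hcast]; ring
  · have h0 : m i = 0 := Finsupp.notMem_support_iff.mp hmi
    rw [if_neg hmi, h0]
    simp

lemma euler {t₁ t₂ : ℕ} {d : ℤ} {f : MvPolynomial (Fin 2) ℝ} (hf : IsQHZ t₁ t₂ d f) :
    C (t₁ : ℝ) * X 0 * pderiv 0 f + C (t₂ : ℝ) * X 1 * pderiv 1 f = C (d : ℝ) * f := by
  ext m
  rw [coeff_add, mul_assoc, mul_assoc, coeff_C_mul, coeff_C_mul, coeff_C_mul,
    coeff_X_mul_pderiv, coeff_X_mul_pderiv]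
  by_cases hm : coeff m f = 0
  · rw [hm]; ring
  · have := hf m (MvPolynomial.mem_support_iff.mpr hm)
    have hcast : (t₁ : ℝ) * (m 0 : ℝ) + (t₂ : ℝ) * (m 1 : ℝ) = (d : ℝ) := by
      exact_mod_cast this
    linear_combination coeff m f * hcast

variable {t₁ t₂ : ℕ} {d d₁ d₂ : ℤ}

lemma qhz_congr {f : MvPolynomial (Fin 2) ℝ} (hf : IsQHZ t₁ t₂ d f) (hd : d = d₁) :
    IsQHZ t₁ t₂ d₁ f := hd ▸ hf

lemma qhz_add {f g : MvPolynomial (Fin 2) ℝ} (hf : IsQHZ t₁ t₂ d f) (hg : IsQHZ t₁ t₂ d g) :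
    IsQHZ t₁ t₂ d (f + g) := by
  intro m hm
  rcases Finset.mem_union.mp (MvPolynomial.support_add hm) with h | h
  · exact hf m h
  · exact hg m h

lemma qhz_neg {f : MvPolynomial (Fin 2) ℝ} (hf : IsQHZ t₁ t₂ d f) :
    IsQHZ t₁ t₂ d (-f) := by
  intro m hm
  apply hf m
  rwa [MvPolynomial.support_neg] at hm

lemma qhz_sub {f g : MvPolynomial (Fin 2) ℝ} (hf : IsQHZ t₁ t₂ d f) (hg : IsQHZ t₁ t₂ d g) :
    IsQHZ t₁ t₂ d (f - g) := by
  rw [sub_eq_add_neg]; exact qhz_add hf (qhz_neg hg)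

lemma qhz_mul {f g : MvPolynomial (Fin 2) ℝ} (hf : IsQHZ t₁ t₂ d₁ f) (hg : IsQHZ t₁ t₂ d₂ g) :
    IsQHZ t₁ t₂ (d₁ + d₂) (f * g) := by
  classical
  intro m hm
  have := MvPolynomial.support_mul f g hm
  rw [Finset.mem_add] at this
  obtain ⟨a, ha, b, hb, rfl⟩ := this
  have h1 := hf a ha
  have h2 := hg b hb
  have e0 : ((a + b : Fin 2 →₀ ℕ)) 0 = a 0 + b 0 := Finsupp.add_apply a b 0
  have e1 : ((a + b : Fin 2 →₀ ℕ)) 1 = a 1 + b 1 := Finsupp.add_apply a b 1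
  rw [e0, e1]
  push_cast
  linarith

lemma qhz_C (c : ℝ) : IsQHZ t₁ t₂ 0 (C c : MvPolynomial (Fin 2) ℝ) := by
  intro m hm
  rw [show (C c : MvPolynomial (Fin 2) ℝ) = monomial 0 c from rfl] at hm
  have := MvPolynomial.support_monomial_subset hm
  rw [Finset.mem_singleton] at this
  subst this
  simp

lemma qhz_X0 : IsQHZ t₁ t₂ (t₁ : ℤ) (X 0 : MvPolynomial (Fin 2) ℝ) := by
  intro m hm
  rw [MvPolynomial.support_X, Finset.mem_singleton] at hm
  subst hm
  simp [Finsupp.single_apply]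

lemma qhz_X1 : IsQHZ t₁ t₂ (t₂ : ℤ) (X 1 : MvPolynomial (Fin 2) ℝ) := by
  intro m hm
  rw [MvPolynomial.support_X, Finset.mem_singleton] at hm
  subst hm
  simp [Finsupp.single_apply]

lemma qhz_Cmul (c : ℝ) {f : MvPolynomial (Fin 2) ℝ} (hf : IsQHZ t₁ t₂ d f) :
    IsQHZ t₁ t₂ d (C c * f) :=
  qhz_congr (qhz_mul (qhz_C c) hf) (zero_add d)

lemma qhz_smul (c : ℝ) {f : MvPolynomial (Fin 2) ℝ} (hf : IsQHZ t₁ t₂ d f) :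
    IsQHZ t₁ t₂ d (c • f) := by
  rw [MvPolynomial.smul_eq_C_mul]; exact qhz_Cmul c hf

lemma qhz_pderiv0 {f : MvPolynomial (Fin 2) ℝ} (hf : IsQHZ t₁ t₂ d f) :
    IsQHZ t₁ t₂ (d - t₁) (pderiv 0 f) := by
  intro m hm
  have hne : coeff m (pderiv 0 f) ≠ 0 := MvPolynomial.mem_support_iff.mp hm
  rw [coeff_pderiv] at hne
  have hsupp : m + Finsupp.single (0 : Fin 2) 1 ∈ f.support := by
    rw [MvPolynomial.mem_support_iff]
    intro h0
    rw [h0, mul_zero] at hne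
    exact hne rfl
  have := hf _ hsupp
  have e0 : ((m + Finsupp.single (0 : Fin 2) 1 : Fin 2 →₀ ℕ)) 0 = m 0 + 1 := by
    simp [Finsupp.add_apply, Finsupp.single_eq_same]
  have e1 : ((m + Finsupp.single (0 : Fin 2) 1 : Fin 2 →₀ ℕ)) 1 = m 1 := by
    simp [Finsupp.add_apply, Finsupp.single_apply]
  rw [e0, e1] at this
  push_cast at this ⊢
  linarith

lemma qhz_pderiv1 {f : MvPolynomial (Fin 2) ℝ} (hf : IsQHZ t₁ t₂ d f) :
    IsQHZ t₁ t₂ (d - t₂) (pderiv 1 f) := by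
  intro m hm
  have hne : coeff m (pderiv 1 f) ≠ 0 := MvPolynomial.mem_support_iff.mp hm
  rw [coeff_pderiv] at hne
  have hsupp : m + Finsupp.single (1 : Fin 2) 1 ∈ f.support := by
    rw [MvPolynomial.mem_support_iff]
    intro h0
    rw [h0, mul_zero] at hne
    exact hne rfl
  have := hf _ hsupp
  have e0 : ((m + Finsupp.single (1 : Fin 2) 1 : Fin 2 →₀ ℕ)) 0 = m 0 := by
    simp [Finsupp.add_apply, Finsupp.single_apply]
  have e1 : ((m + Finsupp.single (1 : Fin 2) 1 : Fin 2 →₀ ℕ)) 1 = m 1 + 1 := by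
    simp [Finsupp.add_apply, Finsupp.single_eq_same]
  rw [e0, e1] at this
  push_cast at this ⊢
  linarith

end QHAux

open QHAux

/-- Conservative–dissipative–flow decomposition
`𝒬ₖ = 𝒞ₖ ⊕ 𝒟ₖ ⊕ ℱₖ`: every quasi-homogeneous vector field `(P,Q)` of type
`t` and degree `k` is uniquely `X_g + η·D₀ + λ·F_n` with `g ∈ Δ`, `η ∈ Pᵗₖ`
and `λ ∈ Pᵗ_{k−n}`, provided `Pᵗ_{k+t₁+t₂} = Δ ⊕ h·Pᵗ_{k−n}`. -/
theorem qh_vector_field_decomposition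
    (t₁ t₂ : ℕ) (ht₁ : 0 < t₁) (ht₂ : 0 < t₂) (n k : ℕ)
    (h μ : MvPolynomial (Fin 2) ℝ)
    (hh : IsQHZ t₁ t₂ ((n : ℤ) + t₁ + t₂) h) (hhne : h ≠ 0)
    (hμ : IsQHZ t₁ t₂ (n : ℤ) μ)
    (Δ : Submodule ℝ (MvPolynomial (Fin 2) ℝ))
    (hΔsub : ∀ g ∈ Δ, IsQHZ t₁ t₂ ((k : ℤ) + t₁ + t₂) g)
    (hdirect : ∀ p : MvPolynomial (Fin 2) ℝ, IsQHZ t₁ t₂ ((k : ℤ) + t₁ + t₂) p →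
      ∃! gq : MvPolynomial (Fin 2) ℝ × MvPolynomial (Fin 2) ℝ,
        gq.1 ∈ Δ ∧ IsQHZ t₁ t₂ ((k : ℤ) - n) gq.2 ∧ p = gq.1 + h * gq.2) :
    ∀ P Q : MvPolynomial (Fin 2) ℝ,
      IsQHZ t₁ t₂ ((k : ℤ) + t₁) P → IsQHZ t₁ t₂ ((k : ℤ) + t₂) Q →
      ∃! u : MvPolynomial (Fin 2) ℝ × MvPolynomial (Fin 2) ℝ × MvPolynomial (Fin 2) ℝ,
        u.1 ∈ Δ ∧ IsQHZ t₁ t₂ (k : ℤ) u.2.1 ∧ IsQHZ t₁ t₂ ((k : ℤ) - n) u.2.2 ∧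
        P = -(pderiv 1 u.1) + u.2.1 * (C (t₁ : ℝ) * X 0)
            + u.2.2 * (-(pderiv 1 h) + μ * (C (t₁ : ℝ) * X 0)) ∧
        Q = pderiv 0 u.1 + u.2.1 * (C (t₂ : ℝ) * X 1)
            + u.2.2 * (pderiv 0 h + μ * (C (t₂ : ℝ) * X 1)) := by
  intro P Q hP hQ
  classical
  -- real scalars
  set KR : ℝ := (k : ℝ) + t₁ + t₂ with hKRdef
  set NR : ℝ := (n : ℝ) + t₁ + t₂ with hNRdef
  have hKR0 : KR ≠ 0 := by positivity
  have hNR0 : NR ≠ 0 := by positivity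
  have hKC : (C (k : ℝ) + C (t₁ : ℝ) + C (t₂ : ℝ) : MvPolynomial (Fin 2) ℝ) = C KR := by
    rw [hKRdef, map_add, map_add]
  have hNC : (C (n : ℝ) + C (t₁ : ℝ) + C (t₂ : ℝ) : MvPolynomial (Fin 2) ℝ) = C NR := by
    rw [hNRdef, map_add, map_add]
  have hKinv : (C (k : ℝ) + C (t₁ : ℝ) + C (t₂ : ℝ) : MvPolynomial (Fin 2) ℝ) * C KR⁻¹ = 1 := by
    rw [hKC, ← map_mul, mul_inv_cancel₀ hKR0, map_one]
  have hNinv : (C (n : ℝ) + C (t₁ : ℝ) + C (t₂ : ℝ) : MvPolynomial (Fin 2) ℝ) * C NR⁻¹ = 1 := by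
    rw [hNC, ← map_mul, mul_inv_cancel₀ hNR0, map_one]
  -- Euler identity for h
  have Eh : C (t₁ : ℝ) * X 0 * pderiv 0 h + C (t₂ : ℝ) * X 1 * pderiv 1 h
      = (C (n : ℝ) + C (t₁ : ℝ) + C (t₂ : ℝ)) * h := by
    have E := euler hh
    have hc : (((n : ℤ) + t₁ + t₂ : ℤ) : ℝ) = (n : ℝ) + t₁ + t₂ := by push_cast; ring
    rw [hc, map_add, map_add] at E
    exact E
  -- the polynomial D₀ ∧ (P,Q)
  set p : MvPolynomial (Fin 2) ℝ := C (t₁ : ℝ) * X 0 * Q - C (t₂ : ℝ) * X 1 * P with hpdef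
  have hp : IsQHZ t₁ t₂ ((k : ℤ) + t₁ + t₂) p := by
    apply qhz_sub
    · exact qhz_congr (qhz_mul (qhz_mul (qhz_C (t₁ : ℝ)) qhz_X0) hQ) (by push_cast; ring)
    · exact qhz_congr (qhz_mul (qhz_mul (qhz_C (t₂ : ℝ)) qhz_X1) hP) (by push_cast; ring)
  obtain ⟨⟨g₀, q₀⟩, ⟨hg₀Δ, hq₀, hpeq⟩, huniq⟩ := hdirect p hp
  simp only at hg₀Δ hq₀ hpeq
  -- definitions of the decomposition data
  set lam : MvPolynomial (Fin 2) ℝ := C NR⁻¹ * q₀ with hlamdef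
  set P' : MvPolynomial (Fin 2) ℝ :=
    P - lam * (-(pderiv 1 h) + μ * (C (t₁ : ℝ) * X 0)) with hP'def
  set Q' : MvPolynomial (Fin 2) ℝ :=
    Q - lam * (pderiv 0 h + μ * (C (t₂ : ℝ) * X 1)) with hQ'def
  set η : MvPolynomial (Fin 2) ℝ := C KR⁻¹ * (pderiv 0 P' + pderiv 1 Q') with hηdef
  set g : MvPolynomial (Fin 2) ℝ := KR⁻¹ • g₀ with hgdef
  -- quasihomogeneity facts
  have hlam : IsQHZ t₁ t₂ ((k : ℤ) - n) lam := qhz_Cmul _ hq₀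
  have hFx : IsQHZ t₁ t₂ ((n : ℤ) + t₁) (-(pderiv 1 h) + μ * (C (t₁ : ℝ) * X 0)) := by
    apply qhz_add
    · exact qhz_congr (qhz_neg (qhz_pderiv1 hh)) (by ring)
    · exact qhz_congr (qhz_mul hμ (qhz_Cmul _ qhz_X0)) (by ring)
  have hFy : IsQHZ t₁ t₂ ((n : ℤ) + t₂) (pderiv 0 h + μ * (C (t₂ : ℝ) * X 1)) := by
    apply qhz_add
    · exact qhz_congr (qhz_pderiv0 hh) (by ring)
    · exact qhz_congr (qhz_mul hμ (qhz_Cmul _ qhz_X1)) (by ring)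
  have hP' : IsQHZ t₁ t₂ ((k : ℤ) + t₁) P' :=
    qhz_sub hP (qhz_congr (qhz_mul hlam hFx) (by ring))
  have hQ' : IsQHZ t₁ t₂ ((k : ℤ) + t₂) Q' :=
    qhz_sub hQ (qhz_congr (qhz_mul hlam hFy) (by ring))
  have hη : IsQHZ t₁ t₂ (k : ℤ) η := by
    apply qhz_Cmul
    apply qhz_add
    · exact qhz_congr (qhz_pderiv0 hP') (by ring)
    · exact qhz_congr (qhz_pderiv1 hQ') (by ring)
  have hgΔ : g ∈ Δ := Submodule.smul_mem _ _ hg₀Δ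
  -- Euler identities for P' and Q'
  have EP' : C (t₁ : ℝ) * X 0 * pderiv 0 P' + C (t₂ : ℝ) * X 1 * pderiv 1 P'
      = (C (k : ℝ) + C (t₁ : ℝ)) * P' := by
    have E := euler hP'
    have hc : (((k : ℤ) + t₁ : ℤ) : ℝ) = (k : ℝ) + t₁ := by push_cast; ring
    rw [hc, map_add] at E
    exact E
  have EQ' : C (t₁ : ℝ) * X 0 * pderiv 0 Q' + C (t₂ : ℝ) * X 1 * pderiv 1 Q'
      = (C (k : ℝ) + C (t₂ : ℝ)) * Q' := by
    have E := euler hQ'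
    have hc : (((k : ℤ) + t₂ : ℤ) : ℝ) = (k : ℝ) + t₂ := by push_cast; ring
    rw [hc, map_add] at E
    exact E
  -- the key algebraic identity
  have E0 : C (t₁ : ℝ) * X 0 * Q' - C (t₂ : ℝ) * X 1 * P' = g₀ := by
    rw [hP'def, hQ'def, hlamdef]
    linear_combination hpeq - (C NR⁻¹ * q₀) * Eh - q₀ * h * hNinv
  have hgC : g = C KR⁻¹ * g₀ := by rw [hgdef, MvPolynomial.smul_eq_C_mul]
  -- derivatives of E0
  have D1 := congrArg (pderiv 1) E0
  have D0 := congrArg (pderiv 0) E0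
  simp only [map_sub, pderiv_mul, pderiv_C, pderiv_X_self,
    pderiv_X_of_ne (show (0 : Fin 2) ≠ 1 by decide),
    pderiv_X_of_ne (show (1 : Fin 2) ≠ 0 by decide),
    zero_mul, mul_zero, add_zero, zero_add, mul_one] at D1 D0
  -- the two components
  have hPeqw : P = -(pderiv 1 g) + η * (C (t₁ : ℝ) * X 0)
      + lam * (-(pderiv 1 h) + μ * (C (t₁ : ℝ) * X 0)) := by
    rw [hgC, pderiv_C_mul, hηdef]
    linear_combination hP'def - C KR⁻¹ * D1 - C KR⁻¹ * EP' - P' * hKinv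
  have hQeqw : Q = pderiv 0 g + η * (C (t₂ : ℝ) * X 1)
      + lam * (pderiv 0 h + μ * (C (t₂ : ℝ) * X 1)) := by
    rw [hgC, pderiv_C_mul, hηdef]
    linear_combination hQ'def + C KR⁻¹ * D0 - C KR⁻¹ * EQ' - Q' * hKinv
  refine ⟨⟨g, η, lam⟩, ⟨hgΔ, hη, hlam, hPeqw, hQeqw⟩, ?_⟩
  rintro ⟨g', η', lam'⟩ ⟨hg'Δ, hη', hlam', hPeq', hQeq'⟩
  simp only at hg'Δ hη' hlam' hPeq' hQeq'
  -- Euler for g'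
  have Eg' : C (t₁ : ℝ) * X 0 * pderiv 0 g' + C (t₂ : ℝ) * X 1 * pderiv 1 g'
      = (C (k : ℝ) + C (t₁ : ℝ) + C (t₂ : ℝ)) * g' := by
    have E := euler (hΔsub g' hg'Δ)
    have hc : (((k : ℤ) + t₁ + t₂ : ℤ) : ℝ) = (k : ℝ) + t₁ + t₂ := by push_cast; ring
    rw [hc, map_add, map_add] at E
    exact E
  have key' : p = (C (k : ℝ) + C (t₁ : ℝ) + C (t₂ : ℝ)) * g'
      + h * ((C (n : ℝ) + C (t₁ : ℝ) + C (t₂ : ℝ)) * lam') := by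
    rw [hpdef]
    linear_combination C (t₁ : ℝ) * X 0 * hQeq' - C (t₂ : ℝ) * X 1 * hPeq' + Eg' + lam' * Eh
  have e1 := huniq (KR • g', NR • lam')
    ⟨Submodule.smul_mem _ _ hg'Δ, qhz_smul _ hlam', by
      simp only [MvPolynomial.smul_eq_C_mul]
      rw [← hKC, ← hNC]
      linear_combination key'⟩
  have hg'eq : KR • g' = g₀ := congrArg Prod.fst e1
  have hlam'eq : NR • lam' = q₀ := congrArg Prod.snd e1
  have hgg : g' = g := by
    rw [hgdef, ← hg'eq, smul_smul, inv_mul_cancel₀ hKR0, one_smul]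
  have hll : lam' = lam := by
    rw [hlamdef, ← hlam'eq, MvPolynomial.smul_eq_C_mul, ← mul_assoc, ← map_mul,
      inv_mul_cancel₀ hNR0, map_one, one_mul]
  have hXne : (C (t₁ : ℝ) * X 0 : MvPolynomial (Fin 2) ℝ) ≠ 0 := by
    apply mul_ne_zero
    · exact fun hc => by
        have := MvPolynomial.C_injective (Fin 2) ℝ (hc.trans (map_zero C).symm)
        exact absurd this (by positivity)
    · exact MvPolynomial.X_ne_zero 0
  have hηη : η' = η := by
    have hcc : η' * (C (t₁ : ℝ) * X 0) = η * (C (t₁ : ℝ) * X 0) := by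
      rw [hgg, hll] at hPeq'
      linear_combination hPeqw - hPeq'
    exact mul_right_cancel₀ hXne hcc
  simp only [Prod.mk.injEq]
  exact ⟨hgg, hηη, hll⟩
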